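/- arXiv:2211.13937 — 2 statements merged into one kernel-verified Lean document; each statement's English description precedes it below -/
import Mathlib

section
/- The optimal value function V* satisfies S* V* = S^{π*} V* = V*, where S* V = max_π S^π V (componentwise maximum over policies) and π* is an optimal policy of the original MDP. -/
open Matrix

attribute [local instance] Matrix.linftyOpNormedRing Matrix.linftyOpNormedAlgebra

/-- Supremum norm on vectors. -/
noncomputable def vnorm {d : ℕ} (v : Fin d → ℝ) : ℝ := ⨆ i, |v i|

/-- Maximum absolute row sum: the operator norm induced by the supremum norm. -/
noncomputable def mnorm {d : ℕ} (M : Matrix (Fin d) (Fin d) ℝ) : ℝ :=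
  ⨆ i, ∑ j, |M i j|

/-- Transition matrix of a deterministic policy. -/
def Pmat {d m : ℕ} (P : Fin d → Fin m → Fin d → ℝ) (pol : Fin d → Fin m) :
    Matrix (Fin d) (Fin d) ℝ :=
  fun x y => P x (pol x) y

/-- Reward vector of a deterministic policy. -/
def rvec {d m : ℕ} (r : Fin d → Fin m → ℝ) (pol : Fin d → Fin m) : Fin d → ℝ :=
  fun x => r x (pol x)

/-- The Varga operator `S^π V = (I - γ P̂^π)⁻¹ (r^π + γ (P^π - P̂^π) V)`. -/
noncomputable def varga {d : ℕ} (γ : ℝ) (Ppol Phatpol : Matrix (Fin d) (Fin d) ℝ)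
    (rpol V : Fin d → ℝ) : Fin d → ℝ :=
  ((1 - γ • Phatpol)⁻¹).mulVec (rpol + γ • ((Ppol - Phatpol).mulVec V))

/-- The Varga optimality operator `S* V = max_π S^π V` (componentwise over policies). -/
noncomputable def Sstar {d m : ℕ} (γ : ℝ) (P Phat : Fin d → Fin m → Fin d → ℝ)
    (r : Fin d → Fin m → ℝ) (V : Fin d → ℝ) : Fin d → ℝ :=
  fun x => ⨆ pol : Fin d → Fin m, varga γ (Pmat P pol) (Pmat Phat pol) (rvec r pol) V x

/- Auxiliary lemmas -/

lemma norm_le_one_of_stochastic {d : ℕ} (M : Matrix (Fin d) (Fin d) ℝ)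
    (h0 : ∀ i j, 0 ≤ M i j) (h1 : ∀ i, ∑ j, M i j = 1) : ‖M‖ ≤ 1 := by
  rw [Matrix.linfty_opNorm_def]
  have : ((Finset.univ : Finset (Fin d)).sup fun i => ∑ j, ‖M i j‖₊) ≤ 1 := by
    refine Finset.sup_le fun i _ => ?_
    rw [← NNReal.coe_le_coe]
    push_cast
    have hsum : (∑ j, (‖M i j‖₊ : ℝ)) = 1 := by
      rw [← h1 i]
      refine Finset.sum_congr rfl fun j _ => ?_
      rw [coe_nnnorm, Real.norm_eq_abs, abs_of_nonneg (h0 i j)]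
    exact le_of_eq hsum
  exact_mod_cast this

lemma pow_entry_nonneg {d : ℕ} (M : Matrix (Fin d) (Fin d) ℝ)
    (h0 : ∀ i j, 0 ≤ M i j) (n : ℕ) : ∀ i j, 0 ≤ (M ^ n) i j := by
  induction n with
  | zero => intro i j; simp [Matrix.one_apply]; positivity
  | succ n ih =>
    intro i j
    rw [pow_succ, Matrix.mul_apply]
    exact Finset.sum_nonneg fun k _ => mul_nonneg (ih i k) (h0 k j)

lemma inv_one_sub_nonneg {d : ℕ} (M : Matrix (Fin d) (Fin d) ℝ)
    (h0 : ∀ i j, 0 ≤ M i j) (h : ‖M‖ < 1) : ∀ i j, 0 ≤ (1 - M)⁻¹ i j := by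
  intro i j
  have hu : IsUnit (1 - M) := isUnit_one_sub_of_norm_lt_one h
  have hinv : (1 - M)⁻¹ = ∑' n : ℕ, M ^ n := by
    rw [Matrix.nonsing_inv_eq_ringInverse, ← geom_series_eq_inverse M h]
    rfl
  rw [hinv]
  have hs := hasSum_geom_series_inverse M h
  -- project to entry (i, j)
  let L : Matrix (Fin d) (Fin d) ℝ →ₗ[ℝ] ℝ :=
    { toFun := fun A => A i j, map_add' := fun _ _ => rfl, map_smul' := fun _ _ => rfl }
  have hL : Continuous L := L.continuous_of_finiteDimensional
  have hs' : HasSum (fun n : ℕ => (M ^ n) i j) ((Ring.inverse (1 - M)) i j) :=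
    hs.map L.toAddMonoidHom hL
  have : (∑' n : ℕ, M ^ n) i j = ∑' n : ℕ, (M ^ n) i j := by
    rw [show (∑' n : ℕ, M ^ n) = Ring.inverse (1 - M) from hs.tsum_eq]
    exact hs'.tsum_eq.symm
  rw [this]
  exact tsum_nonneg fun n => pow_entry_nonneg M h0 n i j

lemma mulVec_mono {d : ℕ} (N : Matrix (Fin d) (Fin d) ℝ) (h0 : ∀ i j, 0 ≤ N i j)
    {u v : Fin d → ℝ} (huv : ∀ i, u i ≤ v i) : ∀ i, N.mulVec u i ≤ N.mulVec v i := by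
  intro i
  simp only [Matrix.mulVec, dotProduct]
  exact Finset.sum_le_sum fun j _ => mul_le_mul_of_nonneg_left (huv j) (h0 i j)

/-- `S* V* = S^{π*} V* = V*` for the optimal value function `V*` and optimal policy `π*`. -/
theorem Sstar_fixed_point {d m : ℕ} (hm : 0 < m)
    (γ : ℝ) (hγ0 : 0 ≤ γ) (hγ1 : γ < 1)
    (P Phat : Fin d → Fin m → Fin d → ℝ) (r : Fin d → Fin m → ℝ)
    (hP : ∀ x a, (∀ y, 0 ≤ P x a y) ∧ ∑ y, P x a y = 1)
    (hPhat : ∀ x a, (∀ y, 0 ≤ Phat x a y) ∧ ∑ y, Phat x a y = 1)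
    (Vstar : Fin d → ℝ) (πstar : Fin d → Fin m)
    (hbell : ∀ x, Vstar x = ⨆ a, (r x a + γ * ∑ y, P x a y * Vstar y))
    (hopt : ∀ x, Vstar x = r x (πstar x) + γ * ∑ y, P x (πstar x) y * Vstar y) :
    Sstar γ P Phat r Vstar =
        varga γ (Pmat P πstar) (Pmat Phat πstar) (rvec r πstar) Vstar ∧
      varga γ (Pmat P πstar) (Pmat Phat πstar) (rvec r πstar) Vstar = Vstar := by
  haveI : Nonempty (Fin m) := ⟨⟨0, hm⟩⟩
  -- basic facts about γ • P̂^pol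
  have hM0 : ∀ pol : Fin d → Fin m, ∀ i j, 0 ≤ (γ • Pmat Phat pol) i j := by
    intro pol i j
    exact mul_nonneg hγ0 ((hPhat i (pol i)).1 j)
  have hMnorm : ∀ pol : Fin d → Fin m, ‖γ • Pmat Phat pol‖ < 1 := by
    intro pol
    have h1 : ‖Pmat Phat pol‖ ≤ 1 :=
      norm_le_one_of_stochastic _ (fun i j => (hPhat i (pol i)).1 j)
        (fun i => (hPhat i (pol i)).2)
    calc ‖γ • Pmat Phat pol‖ = |γ| * ‖Pmat Phat pol‖ := by
          rw [norm_smul, Real.norm_eq_abs]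
      _ ≤ γ * 1 := by
          rw [abs_of_nonneg hγ0]
          exact mul_le_mul_of_nonneg_left h1 hγ0
      _ < 1 := by linarith
  have hunit : ∀ pol : Fin d → Fin m, IsUnit (1 - γ • Pmat Phat pol) := fun pol =>
    isUnit_one_sub_of_norm_lt_one (hMnorm pol)
  have hdet : ∀ pol : Fin d → Fin m, IsUnit (1 - γ • Pmat Phat pol).det := fun pol =>
    (Matrix.isUnit_iff_isUnit_det _).mp (hunit pol)
  -- (I - γ P̂) V* computed entrywise
  have hAV : ∀ pol : Fin d → Fin m, ∀ x,
      (1 - γ • Pmat Phat pol).mulVec Vstar x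
        = Vstar x - γ * ∑ y, Phat x (pol x) y * Vstar y := by
    intro pol x
    rw [Matrix.sub_mulVec, Matrix.smul_mulVec, Matrix.one_mulVec]
    simp only [Pi.sub_apply, Pi.smul_apply, smul_eq_mul]
    congr 1
  -- the argument vector computed entrywise
  have hbv : ∀ pol : Fin d → Fin m, ∀ x,
      (rvec r pol + γ • ((Pmat P pol - Pmat Phat pol).mulVec Vstar)) x
        = r x (pol x) + γ * ∑ y, P x (pol x) y * Vstar y
            - γ * ∑ y, Phat x (pol x) y * Vstar y := by
    intro pol x
    simp only [Pi.add_apply, Pi.smul_apply, smul_eq_mul, Matrix.sub_mulVec, Pi.sub_apply]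
    have h1 : (Pmat P pol).mulVec Vstar x = ∑ y, P x (pol x) y * Vstar y := by
      simp [Matrix.mulVec, dotProduct, Pmat]
    have h2 : (Pmat Phat pol).mulVec Vstar x = ∑ y, Phat x (pol x) y * Vstar y := by
      simp [Matrix.mulVec, dotProduct, Pmat]
    rw [h1, h2, rvec]
    ring
  -- For the optimal policy the two vectors agree, so varga π* V* = V*
  have heqvec : (rvec r πstar + γ • ((Pmat P πstar - Pmat Phat πstar).mulVec Vstar))
      = (1 - γ • Pmat Phat πstar).mulVec Vstar := by
    funext x
    rw [hbv, hAV, ← hopt x]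
  have hfix : varga γ (Pmat P πstar) (Pmat Phat πstar) (rvec r πstar) Vstar = Vstar := by
    rw [varga, heqvec, Matrix.mulVec_mulVec, Matrix.nonsing_inv_mul _ (hdet πstar),
      Matrix.one_mulVec]
  -- For any policy, varga pol V* ≤ V* componentwise
  have hle : ∀ pol : Fin d → Fin m, ∀ x,
      varga γ (Pmat P pol) (Pmat Phat pol) (rvec r pol) Vstar x ≤ Vstar x := by
    intro pol x
    have hb_le : ∀ y, (rvec r pol + γ • ((Pmat P pol - Pmat Phat pol).mulVec Vstar)) y
        ≤ (1 - γ • Pmat Phat pol).mulVec Vstar y := by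
      intro y
      rw [hbv, hAV]
      have : r y (pol y) + γ * ∑ z, P y (pol y) z * Vstar z ≤ Vstar y := by
        rw [hbell y]
        exact le_ciSup (f := fun a : Fin m => r y a + γ * ∑ z, P y a z * Vstar z)
          (Set.Finite.bddAbove (Set.finite_range _)) (pol y)
      linarith
    have hinv_nonneg : ∀ i j, 0 ≤ ((1 - γ • Pmat Phat pol)⁻¹) i j :=
      inv_one_sub_nonneg _ (hM0 pol) (hMnorm pol)
    have := mulVec_mono _ hinv_nonneg hb_le x
    calc varga γ (Pmat P pol) (Pmat Phat pol) (rvec r pol) Vstar x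
        ≤ ((1 - γ • Pmat Phat pol)⁻¹).mulVec
            ((1 - γ • Pmat Phat pol).mulVec Vstar) x := this
      _ = Vstar x := by
          rw [Matrix.mulVec_mulVec, Matrix.nonsing_inv_mul _ (hdet pol), Matrix.one_mulVec]
  have hSstar : Sstar γ P Phat r Vstar = Vstar := by
    funext x
    refine le_antisymm (ciSup_le fun pol => hle pol x) ?_
    have := le_ciSup (f := fun pol : Fin d → Fin m =>
        varga γ (Pmat P pol) (Pmat Phat pol) (rvec r pol) Vstar x)
      (Set.Finite.bddAbove (Set.finite_range _)) πstar
    rw [hfix] at this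
    exact this
  exact ⟨hSstar.trans hfix.symm, hfix⟩
end

section
/- (Control, one-step suboptimality bound) Let π_k be the approximately S-improved policy with S^{π_k} V_{k-1} = S* V_{k-1} + ε^policy_k. If γ' ≥ max(‖G^{π*}‖_∞, ‖G^{π_k}‖_∞) and γ' < 1, then ‖V* - V^{π_k}‖_∞ ≤ (2γ'/(1-γ')) ‖V* - V_{k-1}‖_∞ + (1/(1-γ')) ‖ε^policy_k‖_∞. -/
open Matrix

section Helpers

variable {d : ℕ}

lemma abs_le_vnorm (v : Fin d → ℝ) (i : Fin d) : |v i| ≤ vnorm v := by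
  unfold vnorm
  exact le_ciSup (Set.Finite.bddAbove (Set.finite_range fun i => |v i|)) i

lemma vnorm_nonneg (v : Fin d → ℝ) : 0 ≤ vnorm v := by
  rcases isEmpty_or_nonempty (Fin d) with h | h
  · simp [vnorm, Real.iSup_of_isEmpty]
  · exact le_trans (abs_nonneg _) (abs_le_vnorm v h.some)

lemma vnorm_le {v : Fin d → ℝ} {c : ℝ} (hc : 0 ≤ c) (h : ∀ i, |v i| ≤ c) :
    vnorm v ≤ c := by
  rcases isEmpty_or_nonempty (Fin d) with hd | hd
  · simpa [vnorm, Real.iSup_of_isEmpty] using hc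
  · exact ciSup_le h

lemma rowsum_le_mnorm (M : Matrix (Fin d) (Fin d) ℝ) (i : Fin d) :
    ∑ j, |M i j| ≤ mnorm M := by
  unfold mnorm
  exact le_ciSup (Set.Finite.bddAbove (Set.finite_range fun i => ∑ j, |M i j|)) i

lemma mnorm_nonneg (M : Matrix (Fin d) (Fin d) ℝ) : 0 ≤ mnorm M := by
  rcases isEmpty_or_nonempty (Fin d) with h | h
  · simp [mnorm, Real.iSup_of_isEmpty]
  · exact le_trans (Finset.sum_nonneg fun j _ => abs_nonneg _)
      (rowsum_le_mnorm M h.some)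

lemma mulVec_apply' (M : Matrix (Fin d) (Fin d) ℝ) (v : Fin d → ℝ) (i : Fin d) :
    (M.mulVec v) i = ∑ j, M i j * v j := rfl

lemma abs_mulVec_le (M : Matrix (Fin d) (Fin d) ℝ) (v : Fin d → ℝ) (i : Fin d) :
    |(M.mulVec v) i| ≤ mnorm M * vnorm v := by
  have h1 : |(M.mulVec v) i| ≤ ∑ j, |M i j| * vnorm v := by
    rw [mulVec_apply']
    refine (Finset.abs_sum_le_sum_abs _ _).trans (Finset.sum_le_sum fun j _ => ?_)
    rw [abs_mul]
    exact mul_le_mul_of_nonneg_left (abs_le_vnorm v j) (abs_nonneg _)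
  rw [← Finset.sum_mul] at h1
  exact h1.trans (mul_le_mul_of_nonneg_right (rowsum_le_mnorm M i) (vnorm_nonneg v))

lemma one_sub_smul_mulVec (γ : ℝ) (Q : Matrix (Fin d) (Fin d) ℝ) (x : Fin d → ℝ)
    (i : Fin d) :
    ((1 - γ • Q).mulVec x) i = x i - γ * ∑ j, Q i j * x j := by
  rw [Matrix.sub_mulVec, Matrix.smul_mulVec, Matrix.one_mulVec]
  simp [mulVec_apply']

lemma isUnit_det_one_sub_smul {γ : ℝ} (hγ0 : 0 ≤ γ) (hγ1 : γ < 1)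
    {Q : Matrix (Fin d) (Fin d) ℝ} (hQ0 : ∀ i j, 0 ≤ Q i j)
    (hQ1 : ∀ i, ∑ j, Q i j = 1) :
    IsUnit (1 - γ • Q).det := by
  rw [isUnit_iff_ne_zero]
  intro hdet
  obtain ⟨v, hv0, hv⟩ := Matrix.exists_mulVec_eq_zero_iff.mpr hdet
  haveI : Nonempty (Fin d) := by
    rcases isEmpty_or_nonempty (Fin d) with h | h
    · exact absurd (funext fun j => (h.false j).elim) hv0
    · exact h
  obtain ⟨i, hi⟩ := Finite.exists_max (fun j => |v j|)
  have hvi : v i = γ * ∑ j, Q i j * v j := by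
    have h := congrFun hv i
    rw [one_sub_smul_mulVec] at h
    have h0 : (0 : Fin d → ℝ) i = 0 := rfl
    rw [h0] at h
    linarith
  have hpos : 0 < |v i| := by
    obtain ⟨j, hj⟩ := Function.ne_iff.mp hv0
    exact lt_of_lt_of_le (abs_pos.mpr hj) (hi j)
  have hb : |v i| ≤ γ * |v i| := by
    calc |v i| = γ * |∑ j, Q i j * v j| := by
          rw [hvi, abs_mul, abs_of_nonneg hγ0]
      _ ≤ γ * ∑ j, Q i j * |v i| := by
          refine mul_le_mul_of_nonneg_left ?_ hγ0
          refine (Finset.abs_sum_le_sum_abs _ _).trans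
            (Finset.sum_le_sum fun j _ => ?_)
          rw [abs_mul, abs_of_nonneg (hQ0 i j)]
          exact mul_le_mul_of_nonneg_left (hi j) (hQ0 i j)
      _ = γ * |v i| := by rw [← Finset.sum_mul, hQ1, one_mul]
  nlinarith

lemma inv_mulVec_one_sub {γ : ℝ} {Q : Matrix (Fin d) (Fin d) ℝ}
    (hdet : IsUnit (1 - γ • Q).det) (x : Fin d → ℝ) :
    ((1 - γ • Q)⁻¹).mulVec ((1 - γ • Q).mulVec x) = x := by
  rw [Matrix.mulVec_mulVec, Matrix.nonsing_inv_mul _ hdet, Matrix.one_mulVec]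

lemma inv_mulVec_nonneg {γ : ℝ} (hγ0 : 0 ≤ γ) (hγ1 : γ < 1)
    {Q : Matrix (Fin d) (Fin d) ℝ} (hQ0 : ∀ i j, 0 ≤ Q i j)
    (hQ1 : ∀ i, ∑ j, Q i j = 1) {u : Fin d → ℝ} (hu : ∀ i, 0 ≤ u i) (i : Fin d) :
    0 ≤ (((1 - γ • Q)⁻¹).mulVec u) i := by
  have hdet := isUnit_det_one_sub_smul hγ0 hγ1 hQ0 hQ1
  set x := ((1 - γ • Q)⁻¹).mulVec u with hx
  have hfix : ∀ i, x i = u i + γ * ∑ j, Q i j * x j := by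
    intro i
    have h1 : (1 - γ • Q).mulVec x = u := by
      rw [hx, Matrix.mulVec_mulVec, Matrix.mul_nonsing_inv _ hdet, Matrix.one_mulVec]
    have h := congrFun h1 i
    rw [one_sub_smul_mulVec] at h
    linarith
  haveI : Nonempty (Fin d) := ⟨i⟩
  obtain ⟨j, hj⟩ := Finite.exists_min x
  have key : 0 ≤ x j := by
    have h2 : ∑ l, Q j l * x j ≤ ∑ l, Q j l * x l :=
      Finset.sum_le_sum fun l _ => mul_le_mul_of_nonneg_left (hj l) (hQ0 j l)
    have h5 : ∑ l, Q j l * x j = x j := by rw [← Finset.sum_mul, hQ1, one_mul]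
    have h6 := hfix j
    have h7 := hu j
    nlinarith [mul_le_mul_of_nonneg_left (h5 ▸ h2) hγ0]
  exact key.trans (hj i)

lemma inv_mulVec_mono {γ : ℝ} (hγ0 : 0 ≤ γ) (hγ1 : γ < 1)
    {Q : Matrix (Fin d) (Fin d) ℝ} (hQ0 : ∀ i j, 0 ≤ Q i j)
    (hQ1 : ∀ i, ∑ j, Q i j = 1) {u w : Fin d → ℝ} (huw : ∀ i, u i ≤ w i)
    (i : Fin d) :
    (((1 - γ • Q)⁻¹).mulVec u) i ≤ (((1 - γ • Q)⁻¹).mulVec w) i := by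
  have h := inv_mulVec_nonneg hγ0 hγ1 hQ0 hQ1
    (u := w - u) (fun j => sub_nonneg.2 (huw j)) i
  rw [Matrix.mulVec_sub] at h
  simpa [sub_nonneg] using h

lemma varga_sub (γ : ℝ) (Pp Php : Matrix (Fin d) (Fin d) ℝ) (rp V1 V2 : Fin d → ℝ) :
    varga γ Pp Php rp V1 - varga γ Pp Php rp V2 =
      ((1 - γ • Php)⁻¹ * (γ • (Pp - Php))).mulVec (V1 - V2) := by
  have heq : (rp + γ • ((Pp - Php) *ᵥ V1)) - (rp + γ • ((Pp - Php) *ᵥ V2))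
      = (γ • (Pp - Php)) *ᵥ (V1 - V2) := by
    rw [Matrix.smul_mulVec, Matrix.mulVec_sub, smul_sub]
    abel
  unfold varga
  rw [← Matrix.mulVec_sub, heq, Matrix.mulVec_mulVec]

lemma expand_aux (γ : ℝ) (A B : Matrix (Fin d) (Fin d) ℝ) (rp V : Fin d → ℝ)
    (i : Fin d) :
    (rp + γ • ((A - B).mulVec V)) i =
      rp i + γ * ((∑ j, A i j * V j) - ∑ j, B i j * V j) := by
  simp [mulVec_apply', Matrix.sub_apply, sub_mul, Finset.sum_sub_distrib]

end Helpers

/-- Control, one-step suboptimality bound (Lemma 5):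
`‖V* - V^{π_k}‖_∞ ≤ (2γ'/(1-γ'))‖V* - V_{k-1}‖_∞ + (1/(1-γ'))‖ε^policy_k‖_∞`. -/
theorem osvi_control_one_step {d m : ℕ} (hm : 0 < m)
    (γ : ℝ) (hγ0 : 0 ≤ γ) (hγ1 : γ < 1)
    (P Phat : Fin d → Fin m → Fin d → ℝ) (r : Fin d → Fin m → ℝ)
    (hP : ∀ x a, (∀ y, 0 ≤ P x a y) ∧ ∑ y, P x a y = 1)
    (hPhat : ∀ x a, (∀ y, 0 ≤ Phat x a y) ∧ ∑ y, Phat x a y = 1)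
    (Vstar : Fin d → ℝ) (πstar : Fin d → Fin m)
    (hbell : ∀ x, Vstar x = ⨆ a, (r x a + γ * ∑ y, P x a y * Vstar y))
    (hopt : ∀ x, Vstar x = r x (πstar x) + γ * ∑ y, P x (πstar x) y * Vstar y)
    (W : Fin d → ℝ) (πk : Fin d → Fin m) (εp : Fin d → ℝ)
    (hπk : varga γ (Pmat P πk) (Pmat Phat πk) (rvec r πk) W =
      Sstar γ P Phat r W + εp)
    (γ' : ℝ)
    (hγ'star : mnorm ((1 - γ • Pmat Phat πstar)⁻¹ *
      (γ • (Pmat P πstar - Pmat Phat πstar))) ≤ γ')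
    (hγ'k : mnorm ((1 - γ • Pmat Phat πk)⁻¹ *
      (γ • (Pmat P πk - Pmat Phat πk))) ≤ γ')
    (hγ'lt : γ' < 1)
    (Vpik : Fin d → ℝ)
    (hVpik : Vpik = ((1 - γ • Pmat P πk)⁻¹).mulVec (rvec r πk)) :
    vnorm (Vstar - Vpik) ≤
      2 * γ' / (1 - γ') * vnorm (Vstar - W) + 1 / (1 - γ') * vnorm εp := by
  haveI : Nonempty (Fin m) := ⟨⟨0, hm⟩⟩
  -- stochasticity of policy matrices
  have hPm0 : ∀ (pol : Fin d → Fin m) i j, 0 ≤ Pmat P pol i j :=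
    fun pol i j => (hP i (pol i)).1 j
  have hPm1 : ∀ (pol : Fin d → Fin m) i, ∑ j, Pmat P pol i j = 1 :=
    fun pol i => (hP i (pol i)).2
  have hPhm0 : ∀ (pol : Fin d → Fin m) i j, 0 ≤ Pmat Phat pol i j :=
    fun pol i j => (hPhat i (pol i)).1 j
  have hPhm1 : ∀ (pol : Fin d → Fin m) i, ∑ j, Pmat Phat pol i j = 1 :=
    fun pol i => (hPhat i (pol i)).2
  have hdetk : IsUnit (1 - γ • Pmat Phat πk).det :=
    isUnit_det_one_sub_smul hγ0 hγ1 (hPhm0 πk) (hPhm1 πk)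
  have hdets : IsUnit (1 - γ • Pmat Phat πstar).det :=
    isUnit_det_one_sub_smul hγ0 hγ1 (hPhm0 πstar) (hPhm1 πstar)
  have hdetPk : IsUnit (1 - γ • Pmat P πk).det :=
    isUnit_det_one_sub_smul hγ0 hγ1 (hPm0 πk) (hPm1 πk)
  -- Bellman inequality
  have hbell' : ∀ (a : Fin m) x, r x a + γ * ∑ y, P x a y * Vstar y ≤ Vstar x := by
    intro a x
    rw [hbell x]
    exact le_ciSup (f := fun a => r x a + γ * ∑ y, P x a y * Vstar y)
      (Set.Finite.bddAbove (Set.finite_range _)) a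
  -- V* is a fixed point of the Varga operator for π*
  have hfixstar :
      varga γ (Pmat P πstar) (Pmat Phat πstar) (rvec r πstar) Vstar = Vstar := by
    unfold varga
    have heq : rvec r πstar + γ • ((Pmat P πstar - Pmat Phat πstar).mulVec Vstar)
        = (1 - γ • Pmat Phat πstar).mulVec Vstar := by
      funext x
      rw [expand_aux, one_sub_smul_mulVec]
      have h := hopt x
      simp only [rvec, Pmat]
      linarith [h, mul_sub γ (∑ y, P x (πstar x) y * Vstar y)
        (∑ y, Phat x (πstar x) y * Vstar y)]
    rw [heq, inv_mulVec_one_sub hdets]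
  -- V^{π_k} is a fixed point of the Varga operator for π_k
  have hbellk : ∀ x, Vpik x = r x (πk x) + γ * ∑ y, P x (πk x) y * Vpik y := by
    intro x
    have h1 : (1 - γ • Pmat P πk).mulVec Vpik = rvec r πk := by
      rw [hVpik, Matrix.mulVec_mulVec, Matrix.mul_nonsing_inv _ hdetPk,
        Matrix.one_mulVec]
    have h := congrFun h1 x
    rw [one_sub_smul_mulVec] at h
    simp only [rvec, Pmat] at h ⊢
    linarith
  have hfixk : varga γ (Pmat P πk) (Pmat Phat πk) (rvec r πk) Vpik = Vpik := by
    unfold varga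
    have heq : rvec r πk + γ • ((Pmat P πk - Pmat Phat πk).mulVec Vpik)
        = (1 - γ • Pmat Phat πk).mulVec Vpik := by
      funext x
      rw [expand_aux, one_sub_smul_mulVec]
      have h := hbellk x
      simp only [rvec, Pmat]
      linarith [h, mul_sub γ (∑ y, P x (πk x) y * Vpik y)
        (∑ y, Phat x (πk x) y * Vpik y)]
    rw [heq, inv_mulVec_one_sub hdetk]
  -- S^π V* ≤ V* for every policy π
  have hSle : ∀ (pol : Fin d → Fin m) x,
      varga γ (Pmat P pol) (Pmat Phat pol) (rvec r pol) Vstar x ≤ Vstar x := by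
    intro pol x
    have hu : ∀ i, (rvec r pol + γ • ((Pmat P pol - Pmat Phat pol).mulVec Vstar)) i
        ≤ ((1 - γ • Pmat Phat pol).mulVec Vstar) i := by
      intro i
      rw [expand_aux, one_sub_smul_mulVec]
      have h := hbell' (pol i) i
      simp only [rvec, Pmat]
      linarith [h, mul_sub γ (∑ y, P i (pol i) y * Vstar y)
        (∑ y, Phat i (pol i) y * Vstar y)]
    have h := inv_mulVec_mono hγ0 hγ1 (hPhm0 pol) (hPhm1 pol) hu x
    calc varga γ (Pmat P pol) (Pmat Phat pol) (rvec r pol) Vstar x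
        ≤ (((1 - γ • Pmat Phat pol)⁻¹).mulVec
            ((1 - γ • Pmat Phat pol).mulVec Vstar)) x := h
      _ = Vstar x := by
          rw [inv_mulVec_one_sub (isUnit_det_one_sub_smul hγ0 hγ1 (hPhm0 pol)
            (hPhm1 pol))]
  -- S^π W ≤ S* W for every policy π
  have hSstar : ∀ (pol : Fin d → Fin m) x,
      varga γ (Pmat P pol) (Pmat Phat pol) (rvec r pol) W x
        ≤ Sstar γ P Phat r W x := by
    intro pol x
    unfold Sstar
    exact le_ciSup (f := fun pol : Fin d → Fin m =>
        varga γ (Pmat P pol) (Pmat Phat pol) (rvec r pol) W x)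
      (Set.Finite.bddAbove (Set.finite_range _)) pol
  -- V^{π_k} ≤ V*
  have hVle : ∀ x, Vpik x ≤ Vstar x := by
    intro x
    have hu : ∀ i, rvec r πk i ≤ ((1 - γ • Pmat P πk).mulVec Vstar) i := by
      intro i
      rw [one_sub_smul_mulVec]
      have h := hbell' (πk i) i
      simp only [rvec, Pmat]
      linarith
    have h := inv_mulVec_mono hγ0 hγ1 (hPm0 πk) (hPm1 πk) hu x
    rw [inv_mulVec_one_sub hdetPk] at h
    rw [hVpik]
    exact h
  -- Pointwise suboptimality bound
  set Gs := (1 - γ • Pmat Phat πstar)⁻¹ * (γ • (Pmat P πstar - Pmat Phat πstar))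
    with hGs
  set Gk := (1 - γ • Pmat Phat πk)⁻¹ * (γ • (Pmat P πk - Pmat Phat πk)) with hGk
  have hkey : ∀ x, Vstar x - Vpik x ≤
      (Gs.mulVec (Vstar - W)) x - (Gk.mulVec (Vstar - W)) x - εp x
        + (Gk.mulVec (Vstar - Vpik)) x := by
    intro x
    have hd1 := congrFun (varga_sub γ (Pmat P πk) (Pmat Phat πk) (rvec r πk)
      Vstar Vpik) x
    have hd2 := congrFun (varga_sub γ (Pmat P πk) (Pmat Phat πk) (rvec r πk)
      Vstar W) x
    have hd3 := congrFun (varga_sub γ (Pmat P πstar) (Pmat Phat πstar)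
      (rvec r πstar) Vstar W) x
    have hπk' := congrFun hπk x
    have hfixstar' := congrFun hfixstar x
    have hfixk' := congrFun hfixk x
    have hSle' := hSle πstar x
    have hSstar' := hSstar πstar x
    simp only [Pi.sub_apply, Pi.add_apply] at hd1 hd2 hd3 hπk' ⊢
    -- varga_star W x ≤ Sstar W x, varga_star V* x = V* x, etc.
    linarith
  -- Norm bound
  have hγ'0 : 0 ≤ γ' := (mnorm_nonneg _).trans hγ'k
  set a := vnorm (Vstar - W) with ha
  set e := vnorm εp with he
  set t := vnorm (Vstar - Vpik) with ht
  have ha0 : 0 ≤ a := vnorm_nonneg _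
  have he0 : 0 ≤ e := vnorm_nonneg _
  have ht0 : 0 ≤ t := vnorm_nonneg _
  have hrec : t ≤ γ' * a + γ' * a + e + γ' * t := by
    refine vnorm_le (by positivity) ?_
    intro x
    have hxnn : 0 ≤ (Vstar - Vpik) x := by
      simp only [Pi.sub_apply]
      linarith [hVle x]
    rw [abs_of_nonneg hxnn]
    have b1 : |(Gs.mulVec (Vstar - W)) x| ≤ γ' * a :=
      (abs_mulVec_le _ _ _).trans (mul_le_mul_of_nonneg_right hγ'star ha0)
    have b2 : |(Gk.mulVec (Vstar - W)) x| ≤ γ' * a :=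
      (abs_mulVec_le _ _ _).trans (mul_le_mul_of_nonneg_right hγ'k ha0)
    have b3 : |εp x| ≤ e := abs_le_vnorm εp x
    have b4 : |(Gk.mulVec (Vstar - Vpik)) x| ≤ γ' * t :=
      (abs_mulVec_le _ _ _).trans (mul_le_mul_of_nonneg_right hγ'k ht0)
    have hk := hkey x
    simp only [Pi.sub_apply] at hk ⊢
    have := neg_abs_le ((Gk.mulVec (Vstar - W)) x)
    have := neg_abs_le (εp x)
    have := le_abs_self ((Gs.mulVec (Vstar - W)) x)
    have := le_abs_self ((Gk.mulVec (Vstar - Vpik)) x)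
    linarith
  have h1γ' : 0 < 1 - γ' := by linarith
  rw [show 2 * γ' / (1 - γ') * a + 1 / (1 - γ') * e = (2 * γ' * a + e) / (1 - γ') by
    field_simp, le_div_iff₀ h1γ']
  nlinarith
end
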